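/- Let Z₁, ..., Z_N be i.i.d. standard Gaussian vectors in ℝ^n, K symmetric invertible, M symmetric, and set X_k = K^{-1}Z_k, Y_k = K^{-1}MZ_k. Then the estimator (1/N) Σ_{k=1}^N X_k ∘ Y_k (Hadamard product) is an unbiased estimator of the diagonal of Σ = K^{-1}MK^{-1}: its expectation equals the vector (Σ_{11}, ..., Σ_{nn}). -/
import Mathlib


open Matrix MeasureTheory

theorem stmt_16 {n N : ℕ} (hN : 0 < N) {Ω : Type*} [MeasureSpace Ω]
    [IsProbabilityMeasure (volume : Measure Ω)]
    (K M : Matrix (Fin n) (Fin n) ℝ) (hK : IsUnit K)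
    (hKsymm : K.IsSymm) (hMsymm : M.IsSymm)
    (Z : Fin N → Ω → Fin n → ℝ)
    (hZint : ∀ k i j, Integrable (fun ω => Z k ω i * Z k ω j) (volume : Measure Ω))
    (hZ : ∀ k i j, ∫ ω, Z k ω i * Z k ω j ∂(volume : Measure Ω) = if i = j then (1 : ℝ) else 0)
    (X Y : Fin N → Ω → Fin n → ℝ)
    (hX : ∀ k ω, X k ω = K⁻¹ *ᵥ Z k ω)
    (hY : ∀ k ω, Y k ω = (K⁻¹ * M) *ᵥ Z k ω) :
    ∀ i : Fin n, (∫ ω, (1 / (N : ℝ)) * ∑ k, X k ω i * Y k ω i ∂(volume : Measure Ω))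
      = (K⁻¹ * M * K⁻¹) i i := by
  intro i
  have hAsymm : (K⁻¹)ᵀ = K⁻¹ := by
    rw [Matrix.transpose_nonsing_inv, hKsymm]
  have heq : ∀ k, (fun ω => X k ω i * Y k ω i)
      = fun ω => ∑ a, ∑ b, (K⁻¹ i a * (K⁻¹ * M) i b) * (Z k ω a * Z k ω b) := by
    intro k
    funext ω
    rw [hX, hY]
    simp only [mulVec, dotProduct, Finset.sum_mul_sum]
    exact Finset.sum_congr rfl fun a _ => Finset.sum_congr rfl fun b _ => by ring
  have hone : ∀ k, (∫ ω, X k ω i * Y k ω i ∂(volume : Measure Ω))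
      = ∑ a, K⁻¹ i a * (K⁻¹ * M) i a := by
    intro k
    rw [heq k, integral_finset_sum _ (fun a _ =>
      integrable_finset_sum _ fun b _ => (hZint k a b).const_mul _)]
    refine Finset.sum_congr rfl fun a _ => ?_
    rw [integral_finset_sum _ (fun b _ => (hZint k a b).const_mul _)]
    simp [integral_const_mul, hZ]
  have hint : ∀ k, Integrable (fun ω => X k ω i * Y k ω i) (volume : Measure Ω) := by
    intro k
    rw [heq k]
    exact integrable_finset_sum _ fun a _ =>
      integrable_finset_sum _ fun b _ => (hZint k a b).const_mul _
  rw [integral_const_mul, integral_finset_sum _ (fun k _ => hint k)]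
  simp only [hone, Finset.sum_const, Finset.card_univ, Fintype.card_fin, nsmul_eq_mul]
  rw [← mul_assoc, one_div, inv_mul_cancel₀ (by positivity), one_mul]
  rw [Matrix.mul_apply]
  refine Finset.sum_congr rfl fun a _ => ?_
  rw [mul_comm]
  congr 1
  exact congrFun (congrFun hAsymm a) i
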